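/- Let p ≥ 2 and let G ∈ ℝ^{p×p} be a full-rank matrix whose columns g₁,...,g_p all have unit norm. Let φ = min_{i} ‖g_i - Π_{g_{-i}}(g_i)‖, where Π_{g_{-i}} is the orthogonal projection onto the span of the columns other than g_i, and assume φ > 0. Then λ_max(G'G)/λ_min(G'G) ≤ (p/φ)². -/

import Mathlib

open Matrix Real

/-- for a full-rank matrix `G` with unit-norm columns `gᵢ`, letting
`φ = minᵢ ‖gᵢ - Π_{g₋ᵢ}(gᵢ)‖ > 0` (the minimal leave-one-out residual norm), the condition
number of the Gram matrix satisfies `λ_max(G'G)/λ_min(G'G) ≤ (p/φ)²`. -/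
theorem stmt16 (p : ℕ) (hp : 2 ≤ p) (G : Matrix (Fin p) (Fin p) ℝ)
    (g : Fin p → EuclideanSpace ℝ (Fin p)) (hg : ∀ i j, g i j = G j i)
    (hunit : ∀ i, ‖g i‖ = 1) (hdet : IsUnit G.det)
    (φ : ℝ)
    (hφdef : φ = ⨅ i, ‖g i - (Submodule.orthogonalProjectionOnto
      (Submodule.span ℝ (g '' {j | j ≠ i})) (g i) : EuclideanSpace ℝ (Fin p))‖)
    (hφ : 0 < φ) :
    (⨆ i, (Matrix.isHermitian_iff_isSymm.mpr (Matrix.isSymm_transpose_mul_self G)).eigenvalues i) /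
      (⨅ i, (Matrix.isHermitian_iff_isSymm.mpr (Matrix.isSymm_transpose_mul_self G)).eigenvalues i) ≤
      ((p : ℝ) / φ) ^ 2 := by
  have hp0 : (0:ℝ) < p := by positivity
  have hpn : Nonempty (Fin p) := ⟨⟨0, by omega⟩⟩
  set hA := Matrix.isHermitian_iff_isSymm.mpr (Matrix.isSymm_transpose_mul_self G) with hAdef
  -- eigenvalue = ‖G v‖²
  have heig : ∀ k, hA.eigenvalues k =
      ‖(WithLp.equiv 2 (Fin p → ℝ)).symm (G *ᵥ ⇑(hA.eigenvectorBasis k))‖ ^ 2 := by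
    intro k
    have h := hA.eigenvalues_eq k
    rw [← Matrix.mulVec_mulVec, Matrix.dotProduct_mulVec, Matrix.vecMul_transpose] at h
    simp only [star_trivial, RCLike.re_to_real] at h
    rw [h, ← real_inner_self_eq_norm_sq, PiLp.inner_apply]
    simp [dotProduct, sq]
  -- sum of eigenvalues = p
  have hsum : ∑ k, hA.eigenvalues k = p := by
    have htr : ∑ k, hA.eigenvalues k = (Gᴴ * G).trace := by
      have h := hA.spectral_theorem
      calc ∑ k, hA.eigenvalues k
          = (Matrix.diagonal (RCLike.ofReal ∘ hA.eigenvalues) : Matrix (Fin p) (Fin p) ℝ).trace := by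
            simp [Matrix.trace_diagonal]
        _ = (Gᴴ * G).trace := by
            rw [conjTranspose_eq_transpose_of_trivial, hA.trace_eq_sum_eigenvalues]
            simp [Matrix.trace_diagonal]
    rw [htr]
    have hdiag : ∀ i, (Gᴴ * G) i i = 1 := by
      intro i
      have : ‖g i‖ ^ 2 = (1:ℝ) := by rw [hunit i]; norm_num
      rw [← real_inner_self_eq_norm_sq] at this
      simp only [Matrix.mul_apply, Matrix.conjTranspose_apply, star_trivial]
      rw [← this, PiLp.inner_apply]
      simp [hg, sq]
    rw [Matrix.trace]
    simp only [Matrix.diag]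
    rw [Finset.sum_congr rfl (fun i _ => hdiag i)]
    simp
  have hnonneg : ∀ k, 0 ≤ hA.eigenvalues k := fun k => by rw [heig k]; positivity
  -- upper bound: each eigenvalue ≤ p
  have hub : ∀ k, hA.eigenvalues k ≤ p := by
    intro k
    rw [← hsum]
    exact Finset.single_le_sum (fun j _ => hnonneg j) (Finset.mem_univ k)
  -- lower bound: each eigenvalue ≥ φ²/p
  have hlb : ∀ k, φ ^ 2 / p ≤ hA.eigenvalues k := by
    intro k
    set v : EuclideanSpace ℝ (Fin p) := hA.eigenvectorBasis k with hv
    have hvnorm : ‖v‖ = 1 := hA.eigenvectorBasis.orthonormal.1 k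
    -- a coordinate with v i ^ 2 ≥ 1/p
    have hcoord : ∃ i, 1 / (p:ℝ) ≤ v i ^ 2 := by
      by_contra hcon
      push_neg at hcon
      have hsum1 : ∑ i, v i ^ 2 = 1 := by
        have h := real_inner_self_eq_norm_sq v
        rw [hvnorm, PiLp.inner_apply] at h
        simpa [sq] using h
      have : ∑ i, v i ^ 2 < ∑ _i : Fin p, 1 / (p:ℝ) := by
        apply Finset.sum_lt_sum_of_nonempty
        · exact Finset.univ_nonempty
        · exact fun i _ => hcon i
      rw [hsum1] at this
      simp only [Finset.sum_const, Finset.card_univ, Fintype.card_fin, nsmul_eq_mul] at this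
      rw [mul_one_div, div_self (ne_of_gt hp0)] at this
      exact lt_irrefl _ this
    obtain ⟨i, hi⟩ := hcoord
    set S := Submodule.span ℝ (g '' {j | j ≠ i}) with hS
    set r : EuclideanSpace ℝ (Fin p) :=
      g i - (Submodule.orthogonalProjectionOnto S (g i) : EuclideanSpace ℝ (Fin p)) with hr
    have hφle : φ ≤ ‖r‖ := by
      rw [hφdef]
      exact ciInf_le (Finite.bddBelow_range _) i
    -- G v = Σ_j v j • g j
    set u : EuclideanSpace ℝ (Fin p) := (WithLp.equiv 2 (Fin p → ℝ)).symm (G *ᵥ ⇑v) with hu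
    have husum : u = ∑ j, v j • g j := by
      apply PiLp.ext
      intro m
      simp only [hu, WithLp.equiv_symm_apply, WithLp.ofLp_toLp, Matrix.mulVec, dotProduct]
      rw [WithLp.ofLp_sum, Finset.sum_apply]
      simp [PiLp.smul_apply, hg, mul_comm]
    -- decompose u = v i • r + w with w ∈ S
    have hproj_mem : ((Submodule.orthogonalProjectionOnto S (g i) : EuclideanSpace ℝ (Fin p))) ∈ S :=
      (Submodule.orthogonalProjectionOnto S (g i)).2
    have hr_orth : r ∈ Sᗮ := S.sub_starProjection_mem_orthogonal (g i)
    set w : EuclideanSpace ℝ (Fin p) :=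
      v i • (Submodule.orthogonalProjectionOnto S (g i) : EuclideanSpace ℝ (Fin p)) + ∑ j ∈ Finset.univ.erase i, v j • g j with hw
    have hw_mem : w ∈ S := by
      apply Submodule.add_mem
      · exact Submodule.smul_mem _ _ hproj_mem
      · apply Submodule.sum_mem
        intro j hj
        apply Submodule.smul_mem
        apply Submodule.subset_span
        exact ⟨j, Finset.mem_erase.mp hj |>.1, rfl⟩
    have hdecomp : u = v i • r + w := by
      rw [husum, hw, hr]
      rw [← Finset.add_sum_erase _ _ (Finset.mem_univ i)]
      simp [smul_sub]
      abel
    have hinner : inner ℝ (v i • r) w = (0:ℝ) :=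
      Submodule.inner_left_of_mem_orthogonal hw_mem (Submodule.smul_mem _ _ hr_orth)
    have hnormsq : ‖u‖ ^ 2 = ‖v i • r‖ ^ 2 + ‖w‖ ^ 2 := by
      rw [hdecomp, norm_add_sq_real, hinner]
      ring
    have : φ ^ 2 / p ≤ ‖u‖ ^ 2 := by
      have h1 : v i ^ 2 * φ ^ 2 ≤ ‖v i • r‖ ^ 2 := by
        rw [norm_smul, mul_pow, Real.norm_eq_abs, sq_abs]
        exact mul_le_mul_of_nonneg_left (pow_le_pow_left₀ hφ.le hφle 2) (sq_nonneg _)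
      have h2 : φ ^ 2 / p ≤ v i ^ 2 * φ ^ 2 := by
        rw [div_le_iff₀ hp0] at *
        nlinarith [sq_nonneg φ, hi, hp0]
      calc φ ^ 2 / p ≤ v i ^ 2 * φ ^ 2 := h2
        _ ≤ ‖v i • r‖ ^ 2 := h1
        _ ≤ ‖u‖ ^ 2 := by rw [hnormsq]; nlinarith [sq_nonneg ‖w‖]
    calc φ ^ 2 / p ≤ ‖u‖ ^ 2 := this
      _ = hA.eigenvalues k := (heig k).symm
  -- put it together
  have hsup : (⨆ i, hA.eigenvalues i) ≤ p := ciSup_le hub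
  have hinf : φ ^ 2 / p ≤ ⨅ i, hA.eigenvalues i := le_ciInf hlb
  have hinfpos : 0 < φ ^ 2 / p := by positivity
  calc (⨆ i, hA.eigenvalues i) / (⨅ i, hA.eigenvalues i)
      ≤ (p : ℝ) / (φ ^ 2 / p) := div_le_div₀ (le_of_lt hp0) hsup hinfpos hinf
    _ = ((p : ℝ) / φ) ^ 2 := by field_simp
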